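/- (Lemma 5.4, pairwise ranking bound.) Fix indices j and l with 1 ≤ j ≤ K < l ≤ M, so that p_j − p_l ≥ Δ > 0. For T ≥ 1, let n_j(T) = #{k ≤ T : r_k = j} and n_l(T) = #{k ≤ T : r_k = l} be the empirical request counts. Then ℙ(n_j(T) ≤ n_l(T)) ≤ exp(−T·Δ²/2). -/

import Mathlib

open MeasureTheory ProbabilityTheory Finset

/-- **Pairwise ranking bound, Lemma 5.4.** Let `(r_k)` be i.i.d.
`Fin M`-valued requests with `ℙ(r_k = j) = p_j`, where `p_1 ≥ ⋯ ≥ p_M > 0` sum to one.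
Fix `1 ≤ K < M` and set `Δ = p_K - p_{K+1} > 0`.  For indices `j ≤ K < l` and `T ≥ 1`
requests, the probability that the empirical count of `j` does not exceed that of `l`
is at most `exp(-T·Δ²/2)`. -/
theorem pairwise_ranking_bound {Ω : Type*} [MeasurableSpace Ω]
    (μ : Measure Ω) [IsProbabilityMeasure μ]
    (M : ℕ) (p : Fin M → ℝ)
    (hmono : ∀ i j : Fin M, i ≤ j → p j ≤ p i)
    (hpos : ∀ j : Fin M, 0 < p j)
    (hsum : ∑ j, p j = 1)
    (r : ℕ → Ω → Fin M)
    (hmeas : ∀ k, Measurable (r k))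
    (hindep : iIndepFun r μ)
    (hdist : ∀ (k : ℕ) (j : Fin M), μ {ω | r k ω = j} = ENNReal.ofReal (p j))
    (K : ℕ) (hK1 : 1 ≤ K) (hKM : K < M)
    (hΔpos : 0 < p ⟨K - 1, by omega⟩ - p ⟨K, hKM⟩)
    (j l : Fin M) (hj : (j : ℕ) < K) (hl : K ≤ (l : ℕ))
    (T : ℕ) (hT : 1 ≤ T) :
    μ {ω | ((Finset.range T).filter (fun k => r k ω = j)).card
            ≤ ((Finset.range T).filter (fun k => r k ω = l)).card}
      ≤ ENNReal.ofReal
          (Real.exp (-(T : ℝ) * (p ⟨K - 1, by omega⟩ - p ⟨K, hKM⟩) ^ 2 / 2)) := by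
  classical
  set δ : ℝ := p ⟨K - 1, by omega⟩ - p ⟨K, hKM⟩ with hδdef
  have hδ0 : 0 < δ := hΔpos
  -- δ < 1
  have hδ1 : δ < 1 := by
    have h1 : p ⟨K - 1, by omega⟩ ≤ 1 := by
      rw [← hsum]
      exact Finset.single_le_sum (fun i _ => (hpos i).le) (Finset.mem_univ _)
    have h2 : 0 < p ⟨K, hKM⟩ := hpos _
    simp only [hδdef]; linarith
  -- the optimizing parameter
  set u : ℝ := Real.sqrt ((1 + δ) / (1 - δ)) with hu
  have hfrac_pos : 0 < (1 + δ) / (1 - δ) := div_pos (by linarith) (by linarith)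
  have hu0 : 0 < u := Real.sqrt_pos.2 hfrac_pos
  have hu1 : 1 ≤ u := by
    have h1 : (1:ℝ) ≤ (1 + δ) / (1 - δ) := by
      rw [le_div_iff₀ (by linarith)]; linarith
    have := Real.sqrt_le_sqrt h1
    simpa [hu] using this
  set t : ℝ := Real.log u with htdef
  have ht0 : 0 ≤ t := Real.log_nonneg hu1
  have het : Real.exp t = u := Real.exp_log hu0
  have hent : Real.exp (-t) = u⁻¹ := by rw [Real.exp_neg, het]
  -- key analytic fact : cosh t - δ sinh t ≤ exp (-δ²/2)
  have hkey : Real.cosh t - δ * Real.sinh t ≤ Real.exp (-(δ ^ 2) / 2) := by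
    have h1δ : (0:ℝ) < 1 - δ := by linarith
    have hu2 : u * u = (1 + δ) / (1 - δ) := Real.mul_self_sqrt hfrac_pos.le
    have hs0 : 0 ≤ 1 - δ ^ 2 := by nlinarith
    have hsu : Real.sqrt (1 - δ ^ 2) * u = 1 + δ := by
      rw [hu, ← Real.sqrt_mul hs0]
      rw [show (1 - δ ^ 2) * ((1 + δ) / (1 - δ)) = (1 + δ) ^ 2 by field_simp; ring]
      exact Real.sqrt_sq (by linarith)
    have heq : Real.cosh t - δ * Real.sinh t = Real.sqrt (1 - δ ^ 2) := by
      rw [Real.cosh_eq, Real.sinh_eq, het, hent]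
      have hune : u ≠ 0 := hu0.ne'
      have hu2' : u * u * (1 - δ) = 1 + δ := by
        rw [hu2]; field_simp
      field_simp
      linear_combination hu2' - 2 * hsu
    rw [heq]
    have hle : 1 - δ ^ 2 ≤ Real.exp (-(δ ^ 2)) := by
      have := Real.add_one_le_exp (-(δ ^ 2)); linarith
    calc Real.sqrt (1 - δ ^ 2) ≤ Real.sqrt (Real.exp (-(δ ^ 2))) := Real.sqrt_le_sqrt hle
      _ = Real.exp (-(δ ^ 2) / 2) := by
          have h2 : Real.exp (-(δ ^ 2)) = Real.exp (-(δ ^ 2) / 2) * Real.exp (-(δ ^ 2) / 2) := by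
            rw [← Real.exp_add]; ring_nf
          rw [h2, Real.sqrt_mul_self (Real.exp_pos _).le]
  -- the random variables
  set f : Fin M → ℝ := fun i => (if i = l then 1 else 0) - (if i = j then 1 else 0) with hf
  have hfmeas : Measurable f := measurable_of_countable f
  set X : ℕ → Ω → ℝ := fun k => f ∘ r k with hXdef
  have hXmeas : ∀ k, Measurable (X k) := fun k => hfmeas.comp (hmeas k)
  have hXindep : iIndepFun X μ :=
    hindep.comp (fun _ => f) (fun _ => hfmeas)
  have hfval : ∀ i : Fin M, f i = 1 ∨ f i = 0 ∨ f i = -1 := by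
    intro i
    simp only [hf]
    split_ifs <;> norm_num
  have hXabs : ∀ k ω, |X k ω| ≤ 1 := by
    intro k ω
    have hx : X k ω = f (r k ω) := rfl
    rcases hfval (r k ω) with h | h | h <;> rw [hx, h] <;> norm_num
  -- integrability of each exp(t * X k)
  have hint_exp : ∀ k, Integrable (fun ω => Real.exp (t * X k ω)) μ := by
    intro k
    refine Integrable.mono' (integrable_const (Real.exp |t|))
      (((hXmeas k).const_mul t).exp.aestronglyMeasurable) ?_
    filter_upwards with ω
    rw [Real.norm_eq_abs, Real.abs_exp, Real.exp_le_exp]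
    calc t * X k ω ≤ |t * X k ω| := le_abs_self _
      _ = |t| * |X k ω| := abs_mul _ _
      _ ≤ |t| * 1 := mul_le_mul_of_nonneg_left (hXabs k ω) (abs_nonneg t)
      _ = |t| := mul_one _
  -- integrability and expectation of the indicators
  have hind : ∀ (k : ℕ) (i : Fin M),
      Integrable (fun ω => if r k ω = i then (1:ℝ) else 0) μ ∧
      ∫ ω, (if r k ω = i then (1:ℝ) else 0) ∂μ = p i := by
    intro k i
    have hset : MeasurableSet ((r k) ⁻¹' {i}) := (hmeas k) (measurableSet_singleton i)
    have hfun : (fun ω => if r k ω = i then (1:ℝ) else 0)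
        = Set.indicator ((r k) ⁻¹' {i}) (fun _ => (1:ℝ)) := by
      funext ω
      simp [Set.indicator_apply, Set.mem_preimage]
    constructor
    · rw [hfun]; exact (integrable_const (1:ℝ)).indicator hset
    · rw [hfun, MeasureTheory.integral_indicator_const (1:ℝ) hset]
      have : (r k) ⁻¹' {i} = {ω | r k ω = i} := by ext ω; simp
      rw [this, measureReal_def, hdist k i, ENNReal.toReal_ofReal (hpos i).le, smul_eq_mul, mul_one]
  have hXint : ∀ k, Integrable (X k) μ := by
    intro k
    have : X k = (fun ω => if r k ω = l then (1:ℝ) else 0)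
        - (fun ω => if r k ω = j then (1:ℝ) else 0) := by
      funext ω; simp [hXdef, hf, Function.comp_apply]
    rw [this]
    exact (hind k l).1.sub (hind k j).1
  have hEX : ∀ k, ∫ ω, X k ω ∂μ = p l - p j := by
    intro k
    have : (fun ω => X k ω) = (fun ω => (if r k ω = l then (1:ℝ) else 0)
        - (if r k ω = j then (1:ℝ) else 0)) := by
      funext ω; simp [hXdef, hf, Function.comp_apply]
    rw [this, integral_sub (hind k l).1 (hind k j).1, (hind k l).2, (hind k j).2]
  -- the mean is at most -δ
  have hmean : p l - p j ≤ -δ := by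
    have h1 : p ⟨K - 1, by omega⟩ ≤ p j := by
      apply hmono
      rw [Fin.le_def]; simp; omega
    have h2 : p l ≤ p ⟨K, hKM⟩ := by
      apply hmono
      rw [Fin.le_def]; simpa using hl
    simp only [hδdef]; linarith
  -- mgf bound for each X k
  have hmgf : ∀ k, mgf (X k) μ t ≤ Real.exp (-(δ ^ 2) / 2) := by
    intro k
    have hpt : ∀ ω, Real.exp (t * X k ω) ≤ Real.cosh t + X k ω * Real.sinh t := by
      intro ω
      have hx : X k ω = f (r k ω) := rfl
      rcases hfval (r k ω) with h | h | h <;> rw [hx, h]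
      · rw [mul_one, one_mul, Real.cosh_add_sinh]
      · rw [mul_zero, zero_mul, add_zero, Real.exp_zero]
        exact Real.one_le_cosh t
      · rw [mul_neg_one, neg_one_mul, ← sub_eq_add_neg, Real.cosh_sub_sinh]
    have hint_rhs : Integrable (fun ω => Real.cosh t + X k ω * Real.sinh t) μ :=
      (integrable_const _).add ((hXint k).mul_const _)
    calc mgf (X k) μ t = ∫ ω, Real.exp (t * X k ω) ∂μ := rfl
      _ ≤ ∫ ω, (Real.cosh t + X k ω * Real.sinh t) ∂μ :=
          integral_mono (hint_exp k) hint_rhs (fun ω => hpt ω)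
      _ = Real.cosh t + (∫ ω, X k ω ∂μ) * Real.sinh t := by
          rw [integral_add (integrable_const _) ((hXint k).mul_const _),
            integral_const, integral_mul_const]
          simp
      _ = Real.cosh t + (p l - p j) * Real.sinh t := by rw [hEX k]
      _ ≤ Real.cosh t - δ * Real.sinh t := by
          have hsh : 0 ≤ Real.sinh t := Real.sinh_nonneg_iff.2 ht0
          nlinarith [hmean]
      _ ≤ Real.exp (-(δ ^ 2) / 2) := hkey
  -- rewrite the event
  have hSint : Integrable (fun ω => Real.exp (t * (∑ k ∈ Finset.range T, X k) ω)) μ :=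
    hXindep.integrable_exp_mul_sum hXmeas (fun k _ => hint_exp k)
  have hset : {ω | ((Finset.range T).filter (fun k => r k ω = j)).card
      ≤ ((Finset.range T).filter (fun k => r k ω = l)).card}
      = {ω | (0:ℝ) ≤ (∑ k ∈ Finset.range T, X k) ω} := by
    ext ω
    simp only [Set.mem_setOf_eq, Finset.sum_apply]
    have hsum' : ∑ k ∈ Finset.range T, X k ω
        = (((Finset.range T).filter (fun k => r k ω = l)).card : ℝ)
          - (((Finset.range T).filter (fun k => r k ω = j)).card : ℝ) := by
      simp only [hXdef, hf, Function.comp_apply]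
      rw [Finset.sum_sub_distrib]
      simp [Finset.sum_boole]
    rw [hsum', sub_nonneg, Nat.cast_le]
  rw [hset]
  -- Chernoff bound
  have hcher := measure_ge_le_exp_mul_mgf (X := ∑ k ∈ Finset.range T, X k) (μ := μ)
    0 ht0 hSint
  have hprod : mgf (∑ k ∈ Finset.range T, X k) μ t
      ≤ Real.exp (-(T : ℝ) * δ ^ 2 / 2) := by
    rw [hXindep.mgf_sum hXmeas (Finset.range T)]
    calc ∏ k ∈ Finset.range T, mgf (X k) μ t
        ≤ ∏ _k ∈ Finset.range T, Real.exp (-(δ ^ 2) / 2) :=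
          Finset.prod_le_prod (fun k _ => mgf_nonneg) (fun k _ => hmgf k)
      _ = Real.exp (-(δ ^ 2) / 2) ^ T := by rw [Finset.prod_const, Finset.card_range]
      _ = Real.exp (-(T : ℝ) * δ ^ 2 / 2) := by
          rw [← Real.exp_nat_mul]; ring_nf
  have hfinal : (μ {ω | (0:ℝ) ≤ (∑ k ∈ Finset.range T, X k) ω}).toReal
      ≤ Real.exp (-(T : ℝ) * δ ^ 2 / 2) := by
    refine hcher.trans ?_
    rw [mul_zero, Real.exp_zero, one_mul]
    exact hprod
  calc μ {ω | (0:ℝ) ≤ (∑ k ∈ Finset.range T, X k) ω}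
      = ENNReal.ofReal ((μ {ω | (0:ℝ) ≤ (∑ k ∈ Finset.range T, X k) ω}).toReal) :=
        (ENNReal.ofReal_toReal (measure_ne_top _ _)).symm
    _ ≤ ENNReal.ofReal (Real.exp (-(T : ℝ) * δ ^ 2 / 2)) :=
        ENNReal.ofReal_le_ofReal hfinal
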